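/- Proposition (strong convexity of the composite DGF on a scaled extension). Let U ⊆ ℝ^m and V ⊆ ℝ^n be nonempty compact convex sets, let h : ℝ^m → ℝ be a linear function h(u) = a·u that is nonnegative on U and strictly positive on relint U, let α_v > 0, and let d_u : ℝ^m → ℝ and d_v : ℝ^n → ℝ be differentiable on relint U and relint V respectively, with d_u μ_u-strongly convex on relint U and d_v μ_v-strongly convex on relint V with respect to the Euclidean norm (μ_u, μ_v > 0), in the gradient-monotonicity sense ⟨∇d(y)−∇d(y′), y−y′⟩ ≥ μ·‖y−y′‖₂². Define d_z(u,w) := d_u(u) + α_v·h(u)·d_v(w/h(u)) on (relint U) ◁^h (relint V). Then there exists μ > 0 such that for all (u,w), (u′,w′) ∈ (relint U) ◁^h (relint V): ⟨∇d_z(u,w) − ∇d_z(u′,w′), (u−u′, w−w′)⟩ ≥ μ·‖(u,w) − (u′,w′)‖₂², i.e., d_z is strongly convex on the relative interior of U ◁^h V with respect to the Euclidean norm. -/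

import Mathlib

open scoped RealInnerProductSpace

section AuxLemmas

lemma convex_intrinsicInterior' {E : Type*} [NormedAddCommGroup E] [NormedSpace ℝ E]
    {s : Set E} (hs : Convex ℝ s) : Convex ℝ (intrinsicInterior ℝ s) := by
  rcases s.eq_empty_or_nonempty with rfl | hne
  · rw [intrinsicInterior_empty]; exact convex_empty
  obtain ⟨p, hp⟩ := hne
  haveI : Nonempty (affineSpan ℝ s) := ⟨⟨p, subset_affineSpan ℝ s hp⟩⟩
  let p' : affineSpan ℝ s := ⟨p, subset_affineSpan ℝ s hp⟩
  let e : (affineSpan ℝ s).direction ≃ᵃⁱ[ℝ] affineSpan ℝ s :=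
    (AffineIsometryEquiv.constVSub ℝ p').symm
  let g : (affineSpan ℝ s).direction →ᵃ[ℝ] E :=
    (affineSpan ℝ s).subtype.comp e.toAffineEquiv.toAffineMap
  have hpre : (e ⁻¹' (((↑) : affineSpan ℝ s → E) ⁻¹' s)) = g ⁻¹' s := by
    ext x; simp [g, e]
  have himg : intrinsicInterior ℝ s = g '' interior (g ⁻¹' s) := by
    rw [intrinsicInterior]
    have h1 : interior (((↑) : affineSpan ℝ s → E) ⁻¹' s)
        = e '' interior (g ⁻¹' s) := by
      rw [← hpre, show (⇑e : _ → _) = ⇑e.toHomeomorph from rfl,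
        e.toHomeomorph.image_interior]
      rw [Set.image_preimage_eq _ e.toHomeomorph.surjective]
    rw [h1, ← Set.image_comp]
    rfl
  rw [himg]
  exact ((hs.affine_preimage g).interior).affine_image g

lemma bregman_nonneg' {E : Type*} [NormedAddCommGroup E] [InnerProductSpace ℝ E]
    [CompleteSpace E] {S : Set E} (hS : Convex ℝ S)
    {f : E → ℝ} {g : E → E} (hf : ∀ y ∈ S, HasGradientAt f (g y) y)
    (hmono : ∀ y ∈ S, ∀ y' ∈ S, 0 ≤ ⟪g y - g y', y - y'⟫)
    {v v' : E} (hv : v ∈ S) (hv' : v' ∈ S) :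
    f v' + ⟪g v', v - v'⟫ ≤ f v := by
  set c : ℝ → E := fun t => v' + t • (v - v') with hc
  have hmem : ∀ t ∈ Set.Icc (0:ℝ) 1, c t ∈ S := by
    intro t ht
    have h := hS hv' hv (by linarith [ht.2] : (0:ℝ) ≤ 1 - t) ht.1 (by ring)
    have : (1 - t) • v' + t • v = c t := by simp [hc]; module
    rwa [this] at h
  have hderiv : ∀ t ∈ Set.Icc (0:ℝ) 1,
      HasDerivAt (fun t => f (c t)) ⟪g (c t), v - v'⟫ t := by
    intro t ht
    have h1 : HasDerivAt c (v - v') t := by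
      simpa [hc] using ((hasDerivAt_id t).smul_const (v - v')).const_add v'
    have h2 := (hf (c t) (hmem t ht)).hasFDerivAt
    have h3 := h2.comp_hasDerivAt t h1
    simpa [InnerProductSpace.toDual_apply_apply, Function.comp_def] using h3
  obtain ⟨tc, htc, heq⟩ := exists_hasDerivAt_eq_slope (fun t => f (c t))
    (fun t => ⟪g (c t), v - v'⟫) one_pos
    (fun t ht => (hderiv t ht).continuousAt.continuousWithinAt)
    (fun t ht => hderiv t (Set.mem_Icc_of_Ioo ht))
  have htc0 : (0:ℝ) < tc := htc.1
  have hmemtc : c tc ∈ S := hmem tc ⟨le_of_lt htc.1, le_of_lt htc.2⟩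
  have h0 : (0:ℝ) ≤ ⟪g (c tc) - g v', c tc - v'⟫ := hmono (c tc) hmemtc v' hv'
  have h4 : c tc - v' = tc • (v - v') := by simp [hc]
  rw [h4, real_inner_smul_right, inner_sub_left] at h0
  have h5 : (0:ℝ) ≤ ⟪g (c tc), v - v'⟫ - ⟪g v', v - v'⟫ :=
    nonneg_of_mul_nonneg_right
      (by linarith [h0] : 0 ≤ tc * (⟪g (c tc), v - v'⟫ - ⟪g v', v - v'⟫)) htc0
  have hc1 : c 1 = v := by simp [hc]
  have hc0 : c 0 = v' := by simp [hc]
  rw [hc1, hc0] at heq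
  have : ⟪g (c tc), v - v'⟫ = f v - f v' := by rw [heq]; ring
  linarith

lemma arith_bound' {x y w s t D1 D2 Mu μu μv αv aR H M c : ℝ}
    (hMu : μu * x ^ 2 ≤ Mu) (hD1 : 0 ≤ D1) (hD2 : 0 ≤ D2)
    (hD12 : μv * y ^ 2 ≤ D1 + D2)
    (hαv : 0 < αv) (hw : 0 ≤ w)
    (hH : 0 ≤ H)
    (hM0 : 0 < M) (hMs : M ≤ s) (hMt : M ≤ t) (hMH : M ≤ H)
    (hc0 : 0 < c) (hcu : c ≤ μu) (hcv : c ≤ αv * μv)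
    (hw' : w ≤ M * y + aR * x) :
    Mu + αv * (s * D1 + t * D2)
      ≥ (c / (1 + 2 * aR ^ 2 + 2 * H)) * (x ^ 2 + w ^ 2) := by
  have hK0 : (0:ℝ) < 1 + 2 * aR ^ 2 + 2 * H := by positivity
  have hw2 : w ^ 2 ≤ 2 * M ^ 2 * y ^ 2 + 2 * aR ^ 2 * x ^ 2 := by
    nlinarith [sq_nonneg (M * y - aR * x), hw, hw']
  have e1 : x ^ 2 + w ^ 2 ≤ (1 + 2 * aR ^ 2 + 2 * H) * (x ^ 2 + M * y ^ 2) := by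
    have h1 : 2 * M ^ 2 * y ^ 2 ≤ 2 * H * (M * y ^ 2) := by
      nlinarith [mul_nonneg hM0.le (sq_nonneg y)]
    nlinarith [mul_nonneg hH (sq_nonneg x),
      mul_nonneg (mul_nonneg (by norm_num : (0:ℝ) ≤ 2) (sq_nonneg aR))
        (mul_nonneg hM0.le (sq_nonneg y))]
  have e2 : c * (x ^ 2 + M * y ^ 2) ≤ Mu + αv * (s * D1 + t * D2) := by
    have hb1 : M * (D1 + D2) ≤ s * D1 + t * D2 := by
      nlinarith [mul_nonneg (sub_nonneg.mpr hMs) hD1,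
        mul_nonneg (sub_nonneg.mpr hMt) hD2]
    have hb2 : αv * (M * (μv * y ^ 2)) ≤ αv * (s * D1 + t * D2) := by
      have h3 : M * (μv * y ^ 2) ≤ M * (D1 + D2) :=
        mul_le_mul_of_nonneg_left hD12 hM0.le
      exact mul_le_mul_of_nonneg_left (le_trans h3 hb1) hαv.le
    have hcux : c * x ^ 2 ≤ μu * x ^ 2 :=
      mul_le_mul_of_nonneg_right hcu (sq_nonneg x)
    have hcvy : c * (M * y ^ 2) ≤ αv * μv * (M * y ^ 2) :=
      mul_le_mul_of_nonneg_right hcv (mul_nonneg hM0.le (sq_nonneg y))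
    nlinarith [hcux, hcvy, hb2, hMu]
  calc c / (1 + 2 * aR ^ 2 + 2 * H) * (x ^ 2 + w ^ 2)
      ≤ c / (1 + 2 * aR ^ 2 + 2 * H)
          * ((1 + 2 * aR ^ 2 + 2 * H) * (x ^ 2 + M * y ^ 2)) :=
        mul_le_mul_of_nonneg_left e1 (by positivity)
    _ = c * (x ^ 2 + M * y ^ 2) := by rw [← mul_assoc, div_mul_cancel₀ c hK0.ne']
    _ ≤ Mu + αv * (s * D1 + t * D2) := e2

end AuxLemmas

set_option maxHeartbeats 1000000 in
/-- **Strong convexity of the composite DGF on a scaled extension** (Proposition 1).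
If `d_u` is `μ_u`-strongly convex on `relint U` and `d_v` is `μ_v`-strongly convex on
`relint V` (gradient-monotonicity sense, Euclidean norm), then the composite
`d_z(u,w) = d_u(u) + α_v·h(u)·d_v(w/h(u))` is strongly convex (some modulus `μ > 0`)
on `(relint U) ◁^h (relint V)` with respect to the Euclidean norm. -/
theorem composite_dgf_strong_convexity
    {m n : ℕ}
    (U : Set (EuclideanSpace ℝ (Fin m))) (V : Set (EuclideanSpace ℝ (Fin n)))
    (hUne : U.Nonempty) (hVne : V.Nonempty)
    (hUc : IsCompact U) (hUconv : Convex ℝ U)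
    (hVc : IsCompact V) (hVconv : Convex ℝ V)
    (a : EuclideanSpace ℝ (Fin m))
    (hh0 : ∀ u ∈ U, 0 ≤ ⟪a, u⟫)
    (hhpos : ∀ u ∈ intrinsicInterior ℝ U, 0 < ⟪a, u⟫)
    (αv : ℝ) (hαv : 0 < αv)
    (μu μv : ℝ) (hμu : 0 < μu) (hμv : 0 < μv)
    (du : EuclideanSpace ℝ (Fin m) → ℝ)
    (gu : EuclideanSpace ℝ (Fin m) → EuclideanSpace ℝ (Fin m))
    (hdu : ∀ u ∈ intrinsicInterior ℝ U, HasGradientAt du (gu u) u)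
    (hmonou : ∀ u ∈ intrinsicInterior ℝ U, ∀ u' ∈ intrinsicInterior ℝ U,
      ⟪gu u - gu u', u - u'⟫ ≥ μu * ‖u - u'‖ ^ 2)
    (dv : EuclideanSpace ℝ (Fin n) → ℝ)
    (gv : EuclideanSpace ℝ (Fin n) → EuclideanSpace ℝ (Fin n))
    (hdv : ∀ y ∈ intrinsicInterior ℝ V, HasGradientAt dv (gv y) y)
    (hmonov : ∀ y ∈ intrinsicInterior ℝ V, ∀ y' ∈ intrinsicInterior ℝ V,
      ⟪gv y - gv y', y - y'⟫ ≥ μv * ‖y - y'‖ ^ 2)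
    (G : EuclideanSpace ℝ (Fin m) × EuclideanSpace ℝ (Fin n)
        → EuclideanSpace ℝ (Fin m) × EuclideanSpace ℝ (Fin n))
    (hG : ∀ z : EuclideanSpace ℝ (Fin m) × EuclideanSpace ℝ (Fin n),
      G z = (gu z.1 + (αv * (dv ((⟪a, z.1⟫)⁻¹ • z.2)
              - ⟪gv ((⟪a, z.1⟫)⁻¹ • z.2), (⟪a, z.1⟫)⁻¹ • z.2⟫)) • a,
            αv • gv ((⟪a, z.1⟫)⁻¹ • z.2))) :
    ∃ μ : ℝ, 0 < μ ∧
      ∀ u ∈ intrinsicInterior ℝ U, ∀ u' ∈ intrinsicInterior ℝ U,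
      ∀ v ∈ intrinsicInterior ℝ V, ∀ v' ∈ intrinsicInterior ℝ V,
        ⟪(G (u, ⟪a, u⟫ • v)).1 - (G (u', ⟪a, u'⟫ • v')).1, u - u'⟫
          + ⟪(G (u, ⟪a, u⟫ • v)).2 - (G (u', ⟪a, u'⟫ • v')).2,
              ⟪a, u⟫ • v - ⟪a, u'⟫ • v'⟫
        ≥ μ * (‖u - u'‖ ^ 2 + ‖⟪a, u⟫ • v - ⟪a, u'⟫ • v'‖ ^ 2) := by
  obtain ⟨Ru, hRu⟩ := isBounded_iff_forall_norm_le.mp hUc.isBounded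
  obtain ⟨Rv, hRv⟩ := isBounded_iff_forall_norm_le.mp hVc.isBounded
  have hH0 : (0:ℝ) ≤ ‖a‖ * max Ru 0 := mul_nonneg (norm_nonneg _) (le_max_right _ _)
  have hc0 : (0:ℝ) < min μu (αv * μv) := lt_min hμu (mul_pos hαv hμv)
  refine ⟨min μu (αv * μv) / (1 + 2 * (‖a‖ * max Rv 0) ^ 2 + 2 * (‖a‖ * max Ru 0)),
    div_pos hc0 (by positivity), ?_⟩
  intro u hu u' hu' v hv v' hv'
  have hVS : Convex ℝ (intrinsicInterior ℝ V) := convex_intrinsicInterior' hVconv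
  have hs : (0:ℝ) < ⟪a, u⟫ := hhpos u hu
  have ht : (0:ℝ) < ⟪a, u'⟫ := hhpos u' hu'
  have hinv1 : (⟪a, u⟫)⁻¹ • (⟪a, u⟫ • v) = v := inv_smul_smul₀ hs.ne' v
  have hinv2 : (⟪a, u'⟫)⁻¹ • (⟪a, u'⟫ • v') = v' := inv_smul_smul₀ ht.ne' v'
  rw [hG, hG]
  simp only [hinv1, hinv2]
  have hmono' : ∀ y ∈ intrinsicInterior ℝ V, ∀ y' ∈ intrinsicInterior ℝ V,
      0 ≤ ⟪gv y - gv y', y - y'⟫ := fun y hy y' hy' =>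
    le_trans (by positivity) (hmonov y hy y' hy')
  have hD1 : 0 ≤ dv v - dv v' - ⟪gv v', v - v'⟫ := by
    have := bregman_nonneg' hVS hdv hmono' hv hv'
    linarith
  have hD2 : 0 ≤ dv v' - dv v - ⟪gv v, v' - v⟫ := by
    have := bregman_nonneg' hVS hdv hmono' hv' hv
    linarith
  have hD12 : μv * ‖v - v'‖ ^ 2
      ≤ (dv v - dv v' - ⟪gv v', v - v'⟫) + (dv v' - dv v - ⟪gv v, v' - v⟫) := by
    have h := hmonov v hv v' hv'
    simp only [inner_sub_left, inner_sub_right] at h ⊢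
    linarith
  -- key algebraic identity
  have key : ⟪(gu u + (αv * (dv v - ⟪gv v, v⟫)) • a)
        - (gu u' + (αv * (dv v' - ⟪gv v', v'⟫)) • a), u - u'⟫
      + ⟪αv • gv v - αv • gv v', ⟪a, u⟫ • v - ⟪a, u'⟫ • v'⟫
      = ⟪gu u - gu u', u - u'⟫
        + αv * (⟪a, u⟫ * (dv v - dv v' - ⟪gv v', v - v'⟫)
          + ⟪a, u'⟫ * (dv v' - dv v - ⟪gv v, v' - v⟫)) := by
    simp only [inner_sub_left, inner_sub_right, inner_add_left,
      real_inner_smul_left, real_inner_smul_right]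
    ring
  rw [key]
  have hMu : μu * ‖u - u'‖ ^ 2 ≤ ⟪gu u - gu u', u - u'⟫ := hmonou u hu u' hu'
  have hM0 : (0:ℝ) < min ⟪a, u⟫ ⟪a, u'⟫ := lt_min hs ht
  have hMH : min ⟪a, u⟫ ⟪a, u'⟫ ≤ ‖a‖ * max Ru 0 := by
    have h1 : ⟪a, u⟫ ≤ ‖a‖ * ‖u‖ := real_inner_le_norm a u
    have h2 : ‖u‖ ≤ max Ru 0 :=
      le_trans (hRu u (intrinsicInterior_subset hu)) (le_max_left _ _)
    calc min ⟪a, u⟫ ⟪a, u'⟫ ≤ ⟪a, u⟫ := min_le_left _ _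
      _ ≤ ‖a‖ * ‖u‖ := h1
      _ ≤ ‖a‖ * max Ru 0 := mul_le_mul_of_nonneg_left h2 (norm_nonneg a)
  have hdiff : |⟪a, u⟫ - ⟪a, u'⟫| ≤ ‖a‖ * ‖u - u'‖ := by
    have h : ⟪a, u⟫ - ⟪a, u'⟫ = ⟪a, u - u'⟫ := (inner_sub_right a u u').symm
    rw [h]
    exact abs_real_inner_le_norm a (u - u')
  have hvR : ‖v‖ ≤ max Rv 0 :=
    le_trans (hRv v (intrinsicInterior_subset hv)) (le_max_left _ _)
  have hv'R : ‖v'‖ ≤ max Rv 0 :=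
    le_trans (hRv v' (intrinsicInterior_subset hv')) (le_max_left _ _)
  have hW : ‖⟪a, u⟫ • v - ⟪a, u'⟫ • v'‖
      ≤ min ⟪a, u⟫ ⟪a, u'⟫ * ‖v - v'‖ + ‖a‖ * max Rv 0 * ‖u - u'‖ := by
    rcases le_total ⟪a, u⟫ ⟪a, u'⟫ with hle | hle
    · have hMs : min ⟪a, u⟫ ⟪a, u'⟫ = ⟪a, u⟫ := min_eq_left hle
      have hsplit : ⟪a, u⟫ • v - ⟪a, u'⟫ • v'
          = ⟪a, u⟫ • (v - v') + (⟪a, u⟫ - ⟪a, u'⟫) • v' := by module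
      rw [hsplit, hMs]
      refine le_trans (norm_add_le _ _) ?_
      rw [norm_smul, norm_smul]
      have h1 : ‖(⟪a, u⟫ : ℝ)‖ = ⟪a, u⟫ := by
        rw [Real.norm_eq_abs, abs_of_pos hs]
      have h2 : ‖(⟪a, u⟫ - ⟪a, u'⟫ : ℝ)‖ * ‖v'‖ ≤ ‖a‖ * ‖u - u'‖ * max Rv 0 := by
        rw [Real.norm_eq_abs]
        exact mul_le_mul hdiff hv'R (norm_nonneg _)
          (mul_nonneg (norm_nonneg _) (norm_nonneg _))
      rw [h1]
      nlinarith [h2]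
    · have hMs : min ⟪a, u⟫ ⟪a, u'⟫ = ⟪a, u'⟫ := min_eq_right hle
      have hsplit : ⟪a, u⟫ • v - ⟪a, u'⟫ • v'
          = ⟪a, u'⟫ • (v - v') + (⟪a, u⟫ - ⟪a, u'⟫) • v := by module
      rw [hsplit, hMs]
      refine le_trans (norm_add_le _ _) ?_
      rw [norm_smul, norm_smul]
      have h1 : ‖(⟪a, u'⟫ : ℝ)‖ = ⟪a, u'⟫ := by
        rw [Real.norm_eq_abs, abs_of_pos ht]
      have h2 : ‖(⟪a, u⟫ - ⟪a, u'⟫ : ℝ)‖ * ‖v‖ ≤ ‖a‖ * ‖u - u'‖ * max Rv 0 := by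
        rw [Real.norm_eq_abs]
        exact mul_le_mul hdiff hvR (norm_nonneg _)
          (mul_nonneg (norm_nonneg _) (norm_nonneg _))
      rw [h1]
      nlinarith [h2]
  have hW' : ‖⟪a, u⟫ • v - ⟪a, u'⟫ • v'‖
      ≤ min ⟪a, u⟫ ⟪a, u'⟫ * ‖v - v'‖ + (‖a‖ * max Rv 0) * ‖u - u'‖ := by
    calc ‖⟪a, u⟫ • v - ⟪a, u'⟫ • v'‖
        ≤ min ⟪a, u⟫ ⟪a, u'⟫ * ‖v - v'‖ + ‖a‖ * max Rv 0 * ‖u - u'‖ := hW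
      _ = min ⟪a, u⟫ ⟪a, u'⟫ * ‖v - v'‖ + (‖a‖ * max Rv 0) * ‖u - u'‖ := by ring
  exact arith_bound' hMu hD1 hD2 hD12 hαv (norm_nonneg _) hH0 hM0
    (min_le_left _ _) (min_le_right _ _) hMH hc0
    (min_le_left _ _) (min_le_right _ _) hW'
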